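/- Let Y be a set and λ > card Y an uncountable regular cardinal, and let C be the closed unbounded filter on λ. Then for each function f : λ → Y there exists a uniform λ-complete filter F on λ such that map f F = map f C and F does not mesh with C (i.e., F and C are disjoint as filters). -/

import Mathlib

open Filter Set

variable {α : Type u}

/-- `A` is closed in the well-ordered type `α`: it contains the least upper bound
of each of its nonempty subsets that has one. -/
def IsClosedSet [LinearOrder α] (A : Set α) : Prop :=
  ∀ B ⊆ A, B.Nonempty → ∀ x, IsLUB B x → x ∈ A

/-- `A` is unbounded in `α`. -/
def IsUnboundedSet [LinearOrder α] (A : Set α) : Prop :=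
  ∀ a : α, ∃ b ∈ A, a < b

/-- `A` is a club (closed unbounded) subset of `α`. -/
def IsClubSet [LinearOrder α] (A : Set α) : Prop :=
  IsClosedSet A ∧ IsUnboundedSet A

/-- The closed unbounded filter: the filter generated by the club subsets. -/
def clubFilter (α : Type u) [LinearOrder α] : Filter α :=
  Filter.generate {A : Set α | IsClubSet A}

/-- A filter is uniform if each of its members has full cardinality. -/
def IsUniform (F : Filter α) : Prop :=
  ∀ s ∈ F, Cardinal.mk s = Cardinal.mk α

/-- A filter is `κ`-complete if it is closed under intersections of fewer than
`κ` of its members. -/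
def IsComplete' (κ : Cardinal.{u}) (F : Filter α) : Prop :=
  ∀ (ι : Type u), Cardinal.mk ι < κ → ∀ s : ι → Set α, (∀ i, s i ∈ F) → (⋂ i, s i) ∈ F

section AuxStmt9

variable {α : Type u} [LinearOrder α] [IsWellOrder α (· < ·)]

/-- Every subset of cardinality less than `#α` is bounded above. -/
lemma aux9_bounded (hreg : (Cardinal.mk α).IsRegular)
    (hseg : ∀ x : α, Cardinal.mk (Set.Iio x) < Cardinal.mk α)
    {A : Set α} (hA : Cardinal.mk A < Cardinal.mk α) :
    ∃ b : α, ∀ a ∈ A, a ≤ b := by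
  by_contra h
  push_neg at h
  have hcov : (Set.univ : Set α) ⊆ ⋃ a : A, Set.Iio (a : α) := by
    intro x _
    obtain ⟨a, ha, hx⟩ := h x
    exact Set.mem_iUnion.2 ⟨⟨a, ha⟩, hx⟩
  have h1 : Cardinal.mk α ≤ Cardinal.mk (⋃ a : A, Set.Iio (a : α)) := by
    calc Cardinal.mk α = Cardinal.mk (Set.univ : Set α) := Cardinal.mk_univ.symm
      _ ≤ _ := Cardinal.mk_le_mk_of_subset hcov
  have h2 : Cardinal.mk (⋃ a : A, Set.Iio (a : α)) < Cardinal.mk α :=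
    lt_of_le_of_lt Cardinal.mk_iUnion_le_sum_mk
      (Cardinal.sum_lt_of_isRegular hreg hA fun a => hseg a)
  exact absurd (lt_of_le_of_lt h1 h2) (lt_irrefl _)

/-- Every bounded-above subset has a least upper bound. -/
lemma aux9_lub {A : Set α} (hA : ∃ b : α, ∀ a ∈ A, a ≤ b) : ∃ x, IsLUB A x := by
  have wf : WellFounded ((· < ·) : α → α → Prop) := IsWellFounded.wf
  have hne : (upperBounds A).Nonempty := ⟨hA.choose, fun _ ha => hA.choose_spec _ ha⟩
  exact ⟨wf.min _ hne, wf.min_mem _ hne, fun u hu => not_lt.1 (wf.not_lt_min _ hu)⟩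

/-- `α` has no maximal element. -/
lemma aux9_nomax (hreg : (Cardinal.mk α).IsRegular) (hunc : Cardinal.aleph0 < Cardinal.mk α)
    (hseg : ∀ x : α, Cardinal.mk (Set.Iio x) < Cardinal.mk α) :
    ∀ x : α, ∃ y, x < y := by
  intro x
  by_contra h
  push_neg at h
  have hcov : (Set.univ : Set α) ⊆ insert x (Set.Iio x) := by
    intro y _
    rcases lt_or_eq_of_le (h y) with h' | h'
    · exact Set.mem_insert_of_mem _ h'
    · exact h' ▸ Set.mem_insert _ _
  have h1 : Cardinal.mk α ≤ Cardinal.mk (Set.Iio x) + 1 := by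
    calc Cardinal.mk α = Cardinal.mk (Set.univ : Set α) := Cardinal.mk_univ.symm
      _ ≤ Cardinal.mk (insert x (Set.Iio x) : Set α) := Cardinal.mk_le_mk_of_subset hcov
      _ ≤ _ := Cardinal.mk_insert_le
  have h2 : Cardinal.mk (Set.Iio x) + 1 < Cardinal.mk α :=
    Cardinal.add_lt_of_lt hreg.aleph0_le (hseg x) (Cardinal.one_lt_aleph0.trans hunc)
  exact absurd (lt_of_le_of_lt h1 h2) (lt_irrefl _)

/-- Every countably-indexed family has a least upper bound of its range. -/
lemma aux9_lub_range (hreg : (Cardinal.mk α).IsRegular)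
    (hunc : Cardinal.aleph0 < Cardinal.mk α)
    (hseg : ∀ x : α, Cardinal.mk (Set.Iio x) < Cardinal.mk α)
    (t : ℕ → α) : ∃ x, IsLUB (Set.range t) x := by
  apply aux9_lub
  apply aux9_bounded hreg hseg
  exact lt_of_le_of_lt (Cardinal.mk_le_aleph0_iff.2 (Set.countable_range t).to_subtype) hunc

/-- The intersection of fewer than `#α` club sets is a club set. -/
lemma aux9_inter_club (hreg : (Cardinal.mk α).IsRegular)
    (hunc : Cardinal.aleph0 < Cardinal.mk α)
    (hseg : ∀ x : α, Cardinal.mk (Set.Iio x) < Cardinal.mk α)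
    {ι : Type u} (hι : Cardinal.mk ι < Cardinal.mk α)
    (s : ι → Set α) (hs : ∀ i, IsClubSet (s i)) : IsClubSet (⋂ i, s i) := by
  constructor
  · intro B hB hBne x hx
    exact Set.mem_iInter.2 fun i => (hs i).1 B (hB.trans (Set.iInter_subset s i)) hBne x hx
  · intro a
    have step : ∀ x : α, ∃ b : α, x < b ∧ ∀ i, ∃ c ∈ s i, x < c ∧ c ≤ b := by
      intro x
      obtain ⟨x', hx'⟩ := aux9_nomax hreg hunc hseg x
      choose c hcmem hclt using fun i => (hs i).2 x
      have hcard : Cardinal.mk (insert x' (Set.range c) : Set α) < Cardinal.mk α := by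
        refine lt_of_le_of_lt Cardinal.mk_insert_le ?_
        exact Cardinal.add_lt_of_lt hreg.aleph0_le
          (lt_of_le_of_lt Cardinal.mk_range_le hι) (Cardinal.one_lt_aleph0.trans hunc)
      obtain ⟨b, hb⟩ := aux9_bounded hreg hseg hcard
      exact ⟨b, lt_of_lt_of_le hx' (hb x' (Set.mem_insert _ _)), fun i =>
        ⟨c i, hcmem i, hclt i, hb _ (Set.mem_insert_of_mem _ ⟨i, rfl⟩)⟩⟩
    choose g hg1 hg2 using step
    set u : ℕ → α := fun n => g^[n] a with hu
    have husucc : ∀ n, u (n + 1) = g (u n) := by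
      intro n
      show g^[n + 1] a = g (g^[n] a)
      rw [Function.iterate_succ_apply']
    have humono : ∀ n, u n < u (n + 1) := fun n => (husucc n).symm ▸ hg1 (u n)
    obtain ⟨x, hx⟩ := aux9_lub_range hreg hunc hseg u
    have hub : ∀ n, u n ≤ x := fun n => hx.1 ⟨n, rfl⟩
    refine ⟨x, Set.mem_iInter.2 fun i => ?_, lt_of_lt_of_le (by simpa [hu] using humono 0) (hub 1)⟩
    set B : Set α := ⋃ n, {c | c ∈ s i ∧ u n < c ∧ c ≤ u (n + 1)} with hB
    have hBs : B ⊆ s i := by rintro c hc; obtain ⟨n, hn⟩ := Set.mem_iUnion.1 hc; exact hn.1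
    have hBn : ∀ n, ∃ c, c ∈ s i ∧ u n < c ∧ c ≤ u (n + 1) := by
      intro n
      obtain ⟨c, hc1, hc2, hc3⟩ := hg2 (u n) i
      exact ⟨c, hc1, hc2, (husucc n).symm ▸ hc3⟩
    have hBne : B.Nonempty := by
      obtain ⟨c, hc⟩ := hBn 0
      exact ⟨c, Set.mem_iUnion.2 ⟨0, hc⟩⟩
    refine (hs i).1 B hBs hBne x ⟨?_, ?_⟩
    · rintro c hc
      obtain ⟨n, hn⟩ := Set.mem_iUnion.1 hc
      exact hn.2.2.trans (hub (n + 1))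
    · intro v hv
      refine hx.2 ?_
      rintro _ ⟨n, rfl⟩
      obtain ⟨c, hc1, hc2, hc3⟩ := hBn n
      exact le_of_lt (lt_of_lt_of_le hc2 (hv (Set.mem_iUnion.2 ⟨n, hc1, hc2, hc3⟩)))

lemma aux9_Ioi_club (hreg : (Cardinal.mk α).IsRegular)
    (hunc : Cardinal.aleph0 < Cardinal.mk α)
    (hseg : ∀ x : α, Cardinal.mk (Set.Iio x) < Cardinal.mk α)
    (a : α) : IsClubSet (Set.Ioi a) := by
  constructor
  · rintro B hB ⟨b, hb⟩ x hx
    exact lt_of_lt_of_le (hB hb) (hx.1 hb)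
  · intro c
    obtain ⟨y, hy⟩ := aux9_nomax hreg hunc hseg (max a c)
    exact ⟨y, lt_of_le_of_lt (le_max_left _ _) hy, lt_of_le_of_lt (le_max_right _ _) hy⟩

lemma aux9_univ_club (hreg : (Cardinal.mk α).IsRegular)
    (hunc : Cardinal.aleph0 < Cardinal.mk α)
    (hseg : ∀ x : α, Cardinal.mk (Set.Iio x) < Cardinal.mk α) :
    IsClubSet (Set.univ : Set α) := by
  refine ⟨fun B _ _ x _ => Set.mem_univ x, fun a => ?_⟩
  obtain ⟨y, hy⟩ := aux9_nomax hreg hunc hseg a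
  exact ⟨y, Set.mem_univ y, hy⟩

/-- The set of limit points of an unbounded set is a club set. -/
lemma aux9_limit_club (hreg : (Cardinal.mk α).IsRegular)
    (hunc : Cardinal.aleph0 < Cardinal.mk α)
    (hseg : ∀ x : α, Cardinal.mk (Set.Iio x) < Cardinal.mk α)
    {T : Set α} (hT : IsUnboundedSet T) :
    IsClubSet {x : α | IsLUB (T ∩ Set.Iio x) x} := by
  constructor
  · intro B hB hBne x hx
    refine ⟨fun c hc => le_of_lt hc.2, fun v hv => ?_⟩
    refine hx.2 fun b hb => ?_
    have hbD : IsLUB (T ∩ Set.Iio b) b := hB hb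
    refine hbD.2 fun c hc => hv ⟨hc.1, lt_of_lt_of_le hc.2 (hx.1 hb)⟩
  · intro a
    choose g hgT hglt using hT
    set t : ℕ → α := fun n => g^[n] (g a) with ht
    have htT : ∀ n, t n ∈ T := by
      intro n
      induction n with
      | zero => exact hgT a
      | succ n ih =>
        show g^[n + 1] (g a) ∈ T
        rw [Function.iterate_succ_apply']
        exact hgT _
    have htsucc : ∀ n, t (n + 1) = g (t n) := by
      intro n
      show g^[n + 1] (g a) = g (g^[n] (g a))
      rw [Function.iterate_succ_apply']
    have htmono : ∀ n, t n < t (n + 1) := fun n => (htsucc n).symm ▸ hglt (t n)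
    obtain ⟨x, hx⟩ := aux9_lub_range hreg hunc hseg t
    have hub : ∀ n, t n ≤ x := fun n => hx.1 ⟨n, rfl⟩
    have ha : a < x := lt_of_lt_of_le (by simpa [ht] using hglt a) (hub 0)
    refine ⟨x, ?_, ha⟩
    refine ⟨fun c hc => le_of_lt hc.2, fun v hv => ?_⟩
    refine hx.2 ?_
    rintro _ ⟨n, rfl⟩
    exact hv ⟨htT n, lt_of_lt_of_le (htmono n) (hub (n + 1))⟩

/-- Removing the limit points from an unbounded set leaves an unbounded set. -/
lemma aux9_diff_unbounded {T : Set α} (hT : IsUnboundedSet T) :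
    IsUnboundedSet (T \ {x : α | IsLUB (T ∩ Set.Iio x) x}) := by
  intro a
  obtain ⟨t0, ht0T, ht0⟩ := hT a
  have wf : WellFounded ((· < ·) : α → α → Prop) := IsWellFounded.wf
  have hne : {c | c ∈ T ∧ t0 < c}.Nonempty := by
    obtain ⟨c, h1, h2⟩ := hT t0; exact ⟨c, h1, h2⟩
  set t := wf.min _ hne with htdef
  have htmem : t ∈ T ∧ t0 < t := wf.min_mem _ hne
  refine ⟨t, ⟨htmem.1, fun hD => ?_⟩, lt_trans ht0 htmem.2⟩
  have hle : t ≤ t0 := by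
    refine hD.2 fun c hc => ?_
    by_contra hlt
    push_neg at hlt
    exact wf.not_lt_min {c | c ∈ T ∧ t0 < c} ⟨hc.1, hlt⟩ hc.2
  exact absurd htmem.2 (not_lt.2 hle)

/-- Unbounded sets have full cardinality. -/
lemma aux9_unbounded_mk (hreg : (Cardinal.mk α).IsRegular)
    (hseg : ∀ x : α, Cardinal.mk (Set.Iio x) < Cardinal.mk α)
    {A : Set α} (hA : IsUnboundedSet A) : Cardinal.mk A = Cardinal.mk α := by
  refine le_antisymm (Cardinal.mk_set_le A) (not_lt.1 fun h => ?_)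
  obtain ⟨b, hb⟩ := aux9_bounded hreg hseg h
  obtain ⟨c, hc, hbc⟩ := hA b
  exact absurd (hb c hc) (not_le.2 hbc)

lemma aux9_club_mem {A : Set α} (hA : IsClubSet A) : A ∈ clubFilter α :=
  Filter.mem_generate_iff.2 ⟨{A}, by simpa using hA, Set.finite_singleton _, by simp⟩

lemma aux9_mem_club (hreg : (Cardinal.mk α).IsRegular)
    (hunc : Cardinal.aleph0 < Cardinal.mk α)
    (hseg : ∀ x : α, Cardinal.mk (Set.Iio x) < Cardinal.mk α)
    {A : Set α} (hA : A ∈ clubFilter α) : ∃ c, IsClubSet c ∧ c ⊆ A := by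
  obtain ⟨t, hts, htf, hsub⟩ := Filter.mem_generate_iff.1 hA
  refine ⟨⋂₀ t, ?_, hsub⟩
  rw [Set.sInter_eq_iInter]
  exact aux9_inter_club hreg hunc hseg
    (lt_of_lt_of_le htf.lt_aleph0 (le_of_lt hunc)) _ fun i => hts i.2

end AuxStmt9

/-- Let `α` be (the order type of) an uncountable regular cardinal `λ = #α` and
`Y` a set of cardinality `< λ`. For each `f : α → Y` there is a uniform
`λ`-complete filter `F` on `α` with `map f F = map f (clubFilter α)` which does
not mesh with the club filter. -/
theorem stmt_9 {α Y : Type u} [LinearOrder α] [IsWellOrder α (· < ·)]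
    (hreg : (Cardinal.mk α).IsRegular) (hunc : Cardinal.aleph0 < Cardinal.mk α)
    (hseg : ∀ x : α, Cardinal.mk (Set.Iio x) < Cardinal.mk α)
    (hY : Cardinal.mk Y < Cardinal.mk α) (f : α → Y) :
    ∃ F : Filter α, IsUniform F ∧ IsComplete' (Cardinal.mk α) F ∧
      Filter.map f F = Filter.map f (clubFilter α) ∧ Disjoint F (clubFilter α) := by
  classical
  obtain ⟨a0⟩ : Nonempty α := by
    rw [← Cardinal.mk_ne_zero_iff]
    exact (Cardinal.aleph0_pos.trans hunc).ne'
  set S : Set Y := {y | ∀ c : Set α, IsClubSet c → (f ⁻¹' {y} ∩ c).Nonempty} with hSdef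
  -- a club contained in `f ⁻¹' S`
  have hEx : ∀ y : ↥(Sᶜ), ∃ c : Set α, IsClubSet c ∧ f ⁻¹' {(y : Y)} ∩ c = ∅ := by
    rintro ⟨y, hy⟩
    simp only [hSdef, Set.mem_compl_iff, Set.mem_setOf_eq, not_forall] at hy
    obtain ⟨c, hc, hne⟩ := hy
    exact ⟨c, hc, Set.not_nonempty_iff_eq_empty.1 hne⟩
  choose cc hcc hccE using hEx
  have hE0 : IsClubSet (⋂ y, cc y) :=
    aux9_inter_club hreg hunc hseg (lt_of_le_of_lt (Cardinal.mk_set_le _) hY) cc hcc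
  have hE0sub : (⋂ y, cc y) ⊆ f ⁻¹' S := by
    intro x hx
    by_contra hfx
    have hmem : x ∈ f ⁻¹' {((⟨f x, hfx⟩ : ↥(Sᶜ)) : Y)} ∩ cc ⟨f x, hfx⟩ :=
      ⟨rfl, Set.mem_iInter.1 hx _⟩
    rw [hccE] at hmem
    exact hmem
  have hfS : f ⁻¹' S ∈ clubFilter α :=
    Filter.mem_of_superset (aux9_club_mem hE0) hE0sub
  have hmapC : Filter.map f (clubFilter α) = Filter.principal S := by
    apply le_antisymm
    · exact Filter.le_principal_iff.2 hfS
    · rw [Filter.le_def]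
      intro T hT
      rw [Filter.mem_principal]
      intro y hy
      obtain ⟨c, hc, hcsub⟩ := aux9_mem_club hreg hunc hseg (Filter.mem_map.1 hT)
      obtain ⟨x, hx1, hx2⟩ := hy c hc
      have : f x = y := hx1
      exact this ▸ hcsub hx2
  -- a point of `S` and its (stationary, hence unbounded) fiber
  obtain ⟨b0, hb0, -⟩ := hE0.2 a0
  have hy0S : f b0 ∈ S := hE0sub hb0
  set T : Set α := f ⁻¹' {f b0} with hTdef
  have hTub : IsUnboundedSet T := by
    intro a
    obtain ⟨x, hx1, hx2⟩ := hy0S _ (aux9_Ioi_club hreg hunc hseg a)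
    exact ⟨x, hx1, hx2⟩
  set D : Set α := {x : α | IsLUB (T ∩ Set.Iio x) x} with hDdef
  have hDclub : IsClubSet D := aux9_limit_club hreg hunc hseg hTub
  have hZub : IsUnboundedSet (T \ D) := aux9_diff_unbounded hTub
  have hZmk : Cardinal.mk (T \ D : Set α) = Cardinal.mk α := aux9_unbounded_mk hreg hseg hZub
  -- one point in each fiber over `S`
  have hp : ∀ y : ↥S, ∃ x : α, f x = (y : Y) := by
    rintro ⟨y, hy⟩
    obtain ⟨x, hx1, -⟩ := hy _ (aux9_univ_club hreg hunc hseg)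
    exact ⟨x, hx1⟩
  choose p hpf using hp
  obtain ⟨b, hb⟩ := aux9_bounded hreg hseg
    (A := Set.range p) (lt_of_le_of_lt (Cardinal.mk_range_le.trans (Cardinal.mk_set_le _)) hY)
  set X : Set α := Set.range p ∪ (T \ D) with hXdef
  refine ⟨Filter.principal X, ?_, ?_, ?_, ?_⟩
  · intro s hs
    rw [Filter.mem_principal] at hs
    refine le_antisymm (Cardinal.mk_set_le s) ?_
    calc Cardinal.mk α = Cardinal.mk (T \ D : Set α) := hZmk.symm
      _ ≤ Cardinal.mk s := Cardinal.mk_le_mk_of_subset (Set.subset_union_right.trans hs)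
  · intro ι hι s hsX
    rw [Filter.mem_principal]
    exact Set.subset_iInter fun i => Filter.mem_principal.1 (hsX i)
  · rw [Filter.map_principal, hmapC]
    have himg : f '' X = S := by
      apply Set.eq_of_subset_of_subset
      · rintro y ⟨x, hx, rfl⟩
        rcases hx with hx | hx
        · obtain ⟨y', rfl⟩ := hx
          rw [hpf]
          exact y'.2
        · have : f x = f b0 := hx.1
          exact this ▸ hy0S
      · intro y hy
        exact ⟨p ⟨y, hy⟩, Or.inl ⟨_, rfl⟩, hpf _⟩
    rw [himg]
  · rw [Filter.disjoint_iff]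
    refine ⟨X, Filter.mem_principal_self X, D ∩ Set.Ioi b,
      aux9_club_mem ?_, ?_⟩
    · have h2 : IsClubSet (⋂₀ {D, Set.Ioi b}) := by
        rw [Set.sInter_eq_iInter]
        refine aux9_inter_club hreg hunc hseg
          (lt_of_lt_of_le (((Set.finite_singleton _).insert _).lt_aleph0)
            (le_of_lt hunc)) _ ?_
        rintro ⟨c, hc⟩
        rcases hc with rfl | hc
        · exact hDclub
        · rw [Set.mem_singleton_iff] at hc
          exact hc ▸ aux9_Ioi_club hreg hunc hseg b
      simpa using h2
    · rw [Set.disjoint_left]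
      rintro x (hx | hx) ⟨hxD, hxb⟩
      · obtain ⟨y', rfl⟩ := hx
        exact absurd hxb (not_lt.2 (hb _ ⟨y', rfl⟩))
      · exact hx.2 hxD
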